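/- Let δ > 0, let p = (x, y) ∈ ℝ², and let ℓ be a line segment in ℝ². If there exist points a, b, c appearing in this order along ℓ (i.e., b ∈ [a, c], a, c ∈ ℓ) such that ‖a − (x, y+δ)‖ ≤ δ, ‖b − (x, y−δ)‖ ≤ δ, and ‖c − (x, y+δ)‖ ≤ δ, then p ∈ ℓ. In particular, the only point of ℝ² within distance δ of both (x, y+δ) and (x, y−δ) is p itself. -/

import Mathlib

lemma stmt_12_aux (δ x y : ℝ) (hδ : 0 < δ) (z : EuclideanSpace ℝ (Fin 2))
    (h1 : dist z (!₂[x, y + δ] : EuclideanSpace ℝ (Fin 2)) ≤ δ)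
    (h2 : dist z (!₂[x, y - δ] : EuclideanSpace ℝ (Fin 2)) ≤ δ) :
    z = (!₂[x, y] : EuclideanSpace ℝ (Fin 2)) := by
  rw [EuclideanSpace.dist_eq] at h1 h2
  simp only [Fin.sum_univ_two, Matrix.cons_val_zero, Matrix.cons_val_one, Matrix.head_cons,
    Real.dist_eq, sq_abs, PiLp.toLp_apply] at h1 h2
  have n1 : (0:ℝ) ≤ (z 0 - x)^2 + (z 1 - (y + δ))^2 := by positivity
  have n2 : (0:ℝ) ≤ (z 0 - x)^2 + (z 1 - (y - δ))^2 := by positivity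
  have s1 := Real.sq_sqrt n1
  have s2 := Real.sq_sqrt n2
  have q1 : (z 0 - x)^2 + (z 1 - (y + δ))^2 ≤ δ^2 := by nlinarith [Real.sqrt_nonneg ((z 0 - x)^2 + (z 1 - (y + δ))^2)]
  have q2 : (z 0 - x)^2 + (z 1 - (y - δ))^2 ≤ δ^2 := by nlinarith [Real.sqrt_nonneg ((z 0 - x)^2 + (z 1 - (y - δ))^2)]
  have hz0 : (z 0 - x)^2 = 0 := le_antisymm (by nlinarith) (sq_nonneg _)
  have hz1 : (z 1 - y)^2 = 0 := le_antisymm (by nlinarith) (sq_nonneg _)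
  have h0 : z 0 = x := by have := sq_eq_zero_iff.mp hz0; linarith
  have h1' : z 1 = y := by have := sq_eq_zero_iff.mp hz1; linarith
  ext i
  fin_cases i <;> simp [h0, h1']

theorem stmt_12 (δ x y : ℝ) (hδ : 0 < δ) (e₁ e₂ a b c : EuclideanSpace ℝ (Fin 2))
    (ha : a ∈ segment ℝ e₁ e₂) (hc : c ∈ segment ℝ e₁ e₂) (hb : b ∈ segment ℝ a c)
    (hda : dist a (!₂[x, y + δ] : EuclideanSpace ℝ (Fin 2)) ≤ δ)
    (hdb : dist b (!₂[x, y - δ] : EuclideanSpace ℝ (Fin 2)) ≤ δ)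
    (hdc : dist c (!₂[x, y + δ] : EuclideanSpace ℝ (Fin 2)) ≤ δ) :
    (!₂[x, y] : EuclideanSpace ℝ (Fin 2)) ∈ segment ℝ e₁ e₂ ∧
    ∀ z : EuclideanSpace ℝ (Fin 2),
      dist z (!₂[x, y + δ] : EuclideanSpace ℝ (Fin 2)) ≤ δ →
      dist z (!₂[x, y - δ] : EuclideanSpace ℝ (Fin 2)) ≤ δ →
      z = (!₂[x, y] : EuclideanSpace ℝ (Fin 2)) := by
  have hball : dist b (!₂[x, y + δ] : EuclideanSpace ℝ (Fin 2)) ≤ δ := by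
    obtain ⟨u, v, hu, hv, huv, rfl⟩ := hb
    obtain rfl : v = 1 - u := by linarith
    set P : EuclideanSpace ℝ (Fin 2) := !₂[x, y + δ] with hP
    rw [dist_eq_norm] at hda hdc ⊢
    have key : u • a + (1 - u) • c - P = u • (a - P) + (1 - u) • (c - P) := by module
    rw [key]
    calc ‖u • (a - P) + (1 - u) • (c - P)‖ ≤ ‖u • (a - P)‖ + ‖(1 - u) • (c - P)‖ :=
          norm_add_le _ _
      _ = u * ‖a - P‖ + (1 - u) * ‖c - P‖ := by
          rw [norm_smul, norm_smul, Real.norm_of_nonneg hu, Real.norm_of_nonneg hv]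
      _ ≤ u * δ + (1 - u) * δ :=
          add_le_add (mul_le_mul_of_nonneg_left hda hu) (mul_le_mul_of_nonneg_left hdc hv)
      _ = δ := by ring
  have hbxy : b = (!₂[x, y] : EuclideanSpace ℝ (Fin 2)) := stmt_12_aux δ x y hδ b hball hdb
  constructor
  · rw [← hbxy]
    exact (convex_segment e₁ e₂).segment_subset ha hc hb
  · exact fun z hz1 hz2 => stmt_12_aux δ x y hδ z hz1 hz2
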